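/- arXiv:1502.03571 — 2 statements merged into one kernel-verified Lean document; each statement's English description precedes it below -/
import Mathlib

section
/- Fix d ≥ 1 and p ∈ [1,∞). For any finite set G ⊆ ℝ^d with |G| = m ≥ 2, the number of distinct subsets of the form Range(G,x,r) = { a ∈ G : |⟨a, x⟩|^p ≤ r }, taken over all x ∈ ℝ^d and all r ≥ 0, is at most m^{d+1}. -/
open Matrix Finset

private lemma two_pow_le_factorial {n : ℕ} (hn : 4 ≤ n) : 2 ^ n ≤ Nat.factorial n := by
  induction n with
  | zero => omega
  | succ k ih =>
    rcases Nat.lt_or_ge k 4 with hk | hk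
    · have hk3 : k = 3 := by omega
      subst hk3; decide
    · calc 2 ^ (k + 1) = 2 * 2 ^ k := by ring
        _ ≤ 2 * Nat.factorial k := by have := ih hk; omega
        _ ≤ (k + 1) * Nat.factorial k := Nat.mul_le_mul_right _ (by omega)
        _ = Nat.factorial (k + 1) := rfl

private lemma choose_le_pow_aux {m k : ℕ} (hk : 3 ≤ k) :
    Nat.choose (2 * m) (k + 1) ≤ m ^ (k + 1) := by
  have h1 : (2 * m).descFactorial (k + 1) = Nat.factorial (k + 1) * Nat.choose (2 * m) (k + 1) :=
    Nat.descFactorial_eq_factorial_mul_choose _ _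
  have h2 : (2 * m).descFactorial (k + 1) ≤ (2 * m) ^ (k + 1) := Nat.descFactorial_le_pow _ _
  have h3 : 2 ^ (k + 1) ≤ Nat.factorial (k + 1) := two_pow_le_factorial (by omega)
  have h4 : 2 ^ (k + 1) * Nat.choose (2 * m) (k + 1) ≤ 2 ^ (k + 1) * m ^ (k + 1) := by
    calc 2 ^ (k + 1) * Nat.choose (2 * m) (k + 1)
        ≤ Nat.factorial (k + 1) * Nat.choose (2 * m) (k + 1) := Nat.mul_le_mul_right _ h3
      _ = (2 * m).descFactorial (k + 1) := h1.symm
      _ ≤ (2 * m) ^ (k + 1) := h2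
      _ = 2 ^ (k + 1) * m ^ (k + 1) := by rw [mul_pow]
  exact Nat.le_of_mul_le_mul_left h4 (Nat.pow_pos (by omega))

private lemma sum_choose_le {m k : ℕ} (hm : 2 ≤ m) (hk : 3 ≤ k) :
    (∑ i ∈ Finset.range (k + 1), Nat.choose (2 * m) i) + 1 ≤ 2 * m ^ k := by
  induction k with
  | zero => omega
  | succ k ih =>
    rcases Nat.lt_or_ge k 3 with hk' | hk'
    · have hk2 : k = 2 := by omega
      subst hk2
      obtain ⟨j, rfl⟩ : ∃ j, m = j + 2 := ⟨m - 2, by omega⟩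
      have hd2 : (2 * (j + 2)).descFactorial 2 = (2 * j + 3) * (2 * (j + 2)) := by
        have h1 : 2 * (j + 2) - 1 = 2 * j + 3 := by omega
        rw [Nat.descFactorial_succ, Nat.descFactorial_one, h1]
      have hd3 : (2 * (j + 2)).descFactorial 3 = (2 * j + 2) * ((2 * j + 3) * (2 * (j + 2))) := by
        have h1 : 2 * (j + 2) - 2 = 2 * j + 2 := by omega
        rw [Nat.descFactorial_succ, hd2, h1]
      have e2 : 2 * Nat.choose (2 * (j + 2)) 2 = (2 * j + 3) * (2 * (j + 2)) := by
        have h := Nat.descFactorial_eq_factorial_mul_choose (2 * (j + 2)) 2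
        rw [hd2] at h
        simpa [Nat.factorial] using h.symm
      have e3 : 6 * Nat.choose (2 * (j + 2)) 3 = (2 * j + 2) * ((2 * j + 3) * (2 * (j + 2))) := by
        have h := Nat.descFactorial_eq_factorial_mul_choose (2 * (j + 2)) 3
        rw [hd3] at h
        simpa [Nat.factorial] using h.symm
      have hs : ∑ i ∈ Finset.range 4, Nat.choose (2 * (j + 2)) i =
          1 + 2 * (j + 2) + Nat.choose (2 * (j + 2)) 2 + Nat.choose (2 * (j + 2)) 3 := by
        simp [Finset.sum_range_succ]
      rw [hs]
      have key : 12 + 12 * (j + 2) + 3 * ((2 * j + 3) * (2 * (j + 2)))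
          + (2 * j + 2) * ((2 * j + 3) * (2 * (j + 2))) ≤ 6 * (2 * (j + 2) ^ (2 + 1)) := by
        have h : 6 * (2 * (j + 2) ^ (2 + 1)) = 12 + 12 * (j + 2)
            + 3 * ((2 * j + 3) * (2 * (j + 2)))
            + (2 * j + 2) * ((2 * j + 3) * (2 * (j + 2)))
            + (4 * (j * j * j) + 24 * (j * j) + 38 * j) := by ring
        omega
      have expand : 6 * (1 + 2 * (j + 2) + Nat.choose (2 * (j + 2)) 2
            + Nat.choose (2 * (j + 2)) 3 + 1)
          = 12 + 12 * (j + 2) + 3 * (2 * Nat.choose (2 * (j + 2)) 2)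
            + 6 * Nat.choose (2 * (j + 2)) 3 := by ring
      rw [e2, e3] at expand
      omega
    · have hih := ih hk'
      rw [Finset.sum_range_succ]
      have hc : Nat.choose (2 * m) (k + 1) ≤ m ^ (k + 1) := choose_le_pow_aux hk'
      have hmk : 2 * m ^ k ≤ m ^ (k + 1) := by
        calc 2 * m ^ k = m ^ k * 2 := by ring
          _ ≤ m ^ k * m := Nat.mul_le_mul_left _ hm
          _ = m ^ (k + 1) := (pow_succ m k).symm
      omega

section SlabPatterns

variable {d : ℕ}

/-- The linear functional on parameter space `(x, s)` whose sign records whether the point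
`e.1` (with side `e.2`) violates the slab constraint. -/
private def slin (e : (Fin d → ℝ) × Bool) (θ : (Fin d → ℝ) × ℝ) : ℝ :=
  (if e.2 then e.1 else -e.1) ⬝ᵥ θ.1 - θ.2

/-- The sign pattern induced by parameter `θ` on the doubled ground set `G × Bool`. -/
private noncomputable def spat (G : Finset (Fin d → ℝ)) (θ : (Fin d → ℝ) × ℝ) :
    Finset ((Fin d → ℝ) × Bool) :=
  (G ×ˢ (Finset.univ : Finset Bool)).filter (fun e => 0 < slin e θ)

/-- Recover the realized range from a sign pattern. -/
private noncomputable def srng (G : Finset (Fin d → ℝ)) (T : Finset ((Fin d → ℝ) × Bool)) :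
    Finset (Fin d → ℝ) :=
  G.filter (fun a => (a, true) ∉ T ∧ (a, false) ∉ T)

private lemma mem_spat {G : Finset (Fin d → ℝ)} {e : (Fin d → ℝ) × Bool}
    {θ : (Fin d → ℝ) × ℝ} : e ∈ spat G θ ↔ e.1 ∈ G ∧ 0 < slin e θ := by
  simp [spat, Finset.mem_filter, Finset.mem_product]

private lemma spat_subset {G : Finset (Fin d → ℝ)} {θ : (Fin d → ℝ) × ℝ} :
    spat G θ ⊆ G ×ˢ (Finset.univ : Finset Bool) := Finset.filter_subset _ _

private lemma slin_true (a : Fin d → ℝ) (θ : (Fin d → ℝ) × ℝ) :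
    slin (a, true) θ = a ⬝ᵥ θ.1 - θ.2 := by simp [slin]

private lemma slin_false (a : Fin d → ℝ) (θ : (Fin d → ℝ) × ℝ) :
    slin (a, false) θ = -(a ⬝ᵥ θ.1) - θ.2 := by simp [slin, neg_dotProduct]

private lemma srng_spat (G : Finset (Fin d → ℝ)) (x : Fin d → ℝ) (s : ℝ) :
    srng G (spat G (x, s)) = G.filter (fun a => |a ⬝ᵥ x| ≤ s) := by
  ext a
  simp only [srng, Finset.mem_filter, mem_spat, slin_true, slin_false, not_and, not_lt]
  constructor
  · rintro ⟨ha, h1, h2⟩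
    have g1 := h1 ha
    have g2 := h2 ha
    exact ⟨ha, abs_le.mpr ⟨by linarith, by linarith⟩⟩
  · rintro ⟨ha, h⟩
    rcases abs_le.mp h with ⟨l, r⟩
    exact ⟨ha, fun _ => by linarith, fun _ => by linarith⟩

private noncomputable def sflip (T : Finset ((Fin d → ℝ) × Bool)) : Finset ((Fin d → ℝ) × Bool) :=
  T.image (fun e => (e.1, !e.2))

private lemma mem_sflip {T : Finset ((Fin d → ℝ) × Bool)} {e : (Fin d → ℝ) × Bool} :
    e ∈ sflip T ↔ (e.1, !e.2) ∈ T := by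
  constructor
  · intro h
    rcases Finset.mem_image.mp h with ⟨e', he', heq⟩
    subst heq
    simpa [Bool.not_not] using he'
  · intro h
    exact Finset.mem_image.mpr ⟨(e.1, !e.2), h, by simp⟩

private lemma sflip_spat (G : Finset (Fin d → ℝ)) (x : Fin d → ℝ) (s : ℝ) :
    spat G (-x, s) = sflip (spat G (x, s)) := by
  ext ⟨a, b⟩
  rw [mem_sflip]
  simp only [mem_spat]
  cases b <;>
    simp [slin, dotProduct_neg, neg_dotProduct]

private lemma srng_sflip (G : Finset (Fin d → ℝ)) (T : Finset ((Fin d → ℝ) × Bool)) :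
    srng G (sflip T) = srng G T := by
  ext a
  simp only [srng, Finset.mem_filter, mem_sflip]
  tauto

private lemma sflip_empty_of_fixed {G : Finset (Fin d → ℝ)} {θ : (Fin d → ℝ) × ℝ}
    (hs : 0 ≤ θ.2) (h : sflip (spat G θ) = spat G θ) : spat G θ = ∅ := by
  by_contra hne
  obtain ⟨⟨a, b⟩, hab⟩ := Finset.nonempty_iff_ne_empty.mpr hne
  have hab' : ((a, b) : (Fin d → ℝ) × Bool) ∈ sflip (spat G θ) := by rw [h]; exact hab
  have h2 : ((a, !b) : (Fin d → ℝ) × Bool) ∈ spat G θ := mem_sflip.mp hab'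
  have l1 := (mem_spat.mp hab).2
  have l2 := (mem_spat.mp h2).2
  have hsum : slin (a, b) θ + slin (a, !b) θ = -(2 * θ.2) := by
    cases b <;> simp [slin, neg_dotProduct] <;> ring
  linarith

/-- The lifted vector in `ℝ^d × ℝ` representing the linear functional `slin e`. -/
private def svec (e : (Fin d → ℝ) × Bool) : (Fin d → ℝ) × ℝ :=
  ((if e.2 then e.1 else -e.1), -1)

private lemma slin_eq (e : (Fin d → ℝ) × Bool) (θ : (Fin d → ℝ) × ℝ) :
    slin e θ = (svec e).1 ⬝ᵥ θ.1 + (svec e).2 * θ.2 := by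
  simp [slin, svec]
  ring

private lemma sum_dot {β : Type*} (s : Finset β) (f : β → Fin d → ℝ) (x : Fin d → ℝ) :
    (∑ e ∈ s, f e) ⬝ᵥ x = ∑ e ∈ s, f e ⬝ᵥ x := by
  simp only [dotProduct, Finset.sum_apply, Finset.sum_mul]
  exact Finset.sum_comm

/-- A nontrivial relation with a positive coefficient contradicts shattering. -/
private lemma shatter_aux {G : Finset (Fin d → ℝ)}
    (𝒯f : Finset (Finset ((Fin d → ℝ) × Bool)))
    (h𝒯 : ∀ T ∈ 𝒯f, ∃ θ : (Fin d → ℝ) × ℝ, T = spat G θ)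
    {A : Finset ((Fin d → ℝ) × Bool)} (hshat : 𝒯f.Shatters A)
    (hAW : ∀ e ∈ A, e.1 ∈ G)
    (c : ((Fin d → ℝ) × Bool) → ℝ)
    (hrel : ∑ e ∈ A, c e • svec e = 0)
    (e₀ : (Fin d → ℝ) × Bool) (he₀ : e₀ ∈ A) (hpos : 0 < c e₀) : False := by
  classical
  obtain ⟨T, hT, hPT⟩ := hshat (Finset.filter_subset (fun e => 0 < c e) A)
  obtain ⟨θ, rfl⟩ := h𝒯 T hT
  have h1 : ∑ e ∈ A, c e • (svec e).1 = 0 := by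
    have h := congrArg Prod.fst hrel
    rw [Prod.fst_sum] at h
    simpa using h
  have h2 : ∑ e ∈ A, c e = 0 := by
    have h := congrArg Prod.snd hrel
    rw [Prod.snd_sum] at h
    simp only [Prod.smul_snd, svec, smul_eq_mul, mul_neg, mul_one, Prod.snd_zero] at h
    have h' : -∑ e ∈ A, c e = 0 := by rw [← Finset.sum_neg_distrib]; exact h
    linarith
  have hzero : ∑ e ∈ A, c e * slin e θ = 0 := by
    have step : ∀ e, c e * slin e θ = (c e • (svec e).1) ⬝ᵥ θ.1 + c e * (-θ.2) := by
      intro e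
      rw [slin_eq, smul_dotProduct]
      simp only [svec, smul_eq_mul]
      ring
    calc ∑ e ∈ A, c e * slin e θ
        = ∑ e ∈ A, ((c e • (svec e).1) ⬝ᵥ θ.1 + c e * (-θ.2)) :=
          Finset.sum_congr rfl (fun e _ => step e)
      _ = (∑ e ∈ A, c e • (svec e).1) ⬝ᵥ θ.1 + (∑ e ∈ A, c e) * (-θ.2) := by
          rw [Finset.sum_add_distrib, sum_dot, Finset.sum_mul]
      _ = 0 := by rw [h1, h2, zero_dotProduct]; ring
  have hterms : ∀ e ∈ A, 0 ≤ c e * slin e θ := by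
    intro e he
    rcases lt_trichotomy (c e) 0 with hlt | heq | hgt
    · have heP : e ∉ A.filter (fun e => 0 < c e) := by
        simp [Finset.mem_filter, not_lt.mpr hlt.le]
      have heT : e ∉ spat G θ := by
        intro hin
        exact heP (by rw [← hPT]; exact Finset.mem_inter.mpr ⟨he, hin⟩)
      have hlin : slin e θ ≤ 0 := by
        by_contra hc
        exact heT (mem_spat.mpr ⟨hAW e he, lt_of_not_ge hc⟩)
      nlinarith
    · simp [heq]
    · have heP : e ∈ A.filter (fun e => 0 < c e) := Finset.mem_filter.mpr ⟨he, hgt⟩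
      have heT : e ∈ A ∩ spat G θ := by rw [hPT]; exact heP
      have hlin := (mem_spat.mp (Finset.mem_inter.mp heT).2).2
      positivity
  have hstrict : 0 < ∑ e ∈ A, c e * slin e θ := by
    refine Finset.sum_pos' hterms ⟨e₀, he₀, ?_⟩
    have heP : e₀ ∈ A.filter (fun e => 0 < c e) := Finset.mem_filter.mpr ⟨he₀, hpos⟩
    have heT : e₀ ∈ A ∩ spat G θ := by rw [hPT]; exact heP
    have hlin := (mem_spat.mp (Finset.mem_inter.mp heT).2).2
    exact mul_pos hpos hlin
  linarith

/-- Any set shattered by a family of slab sign patterns has size at most `d + 1`. -/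
private lemma no_big_shatter {G : Finset (Fin d → ℝ)}
    (𝒯f : Finset (Finset ((Fin d → ℝ) × Bool)))
    (h𝒯 : ∀ T ∈ 𝒯f, ∃ θ : (Fin d → ℝ) × ℝ, T = spat G θ)
    {A : Finset ((Fin d → ℝ) × Bool)} (hshat : 𝒯f.Shatters A) :
    A.card ≤ d + 1 := by
  classical
  by_contra hcard
  push_neg at hcard
  have hAW : ∀ e ∈ A, e.1 ∈ G := by
    obtain ⟨T, hT, hsub⟩ := hshat.exists_superset
    intro e he
    obtain ⟨θ, rfl⟩ := h𝒯 T hT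
    exact (mem_spat.mp (hsub he)).1
  by_cases hinj : Set.InjOn svec (↑A : Set ((Fin d → ℝ) × Bool))
  · have hcard2 : Module.finrank ℝ ((Fin d → ℝ) × ℝ) < (A.image svec).card := by
      rw [Finset.card_image_of_injOn hinj, Module.finrank_prod,
        Module.finrank_fintype_fun_eq_card, Fintype.card_fin, Module.finrank_self]
      omega
    obtain ⟨f, hrel, v₀, hv₀, hfv₀⟩ :=
      Module.exists_nontrivial_relation_of_finrank_lt_card hcard2
    have hinj2 : ∀ x ∈ A, ∀ y ∈ A, svec x = svec y → x = y :=
      fun x hx y hy h => hinj (Finset.mem_coe.mpr hx) (Finset.mem_coe.mpr hy) h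
    have hrelA : ∑ e ∈ A, f (svec e) • svec e = 0 := by
      rw [Finset.sum_image hinj2] at hrel
      exact hrel
    obtain ⟨e₀, he₀, rfl⟩ := Finset.mem_image.mp hv₀
    rcases hfv₀.lt_or_gt with hneg | hpos
    · refine shatter_aux 𝒯f h𝒯 hshat hAW (fun e => -(f (svec e))) ?_ e₀ he₀ (show (0:ℝ) < -f (svec e₀) by linarith)
      rw [← neg_eq_zero, ← Finset.sum_neg_distrib] at hrelA
      rw [← hrelA]
      apply Finset.sum_congr rfl
      intro e _
      rw [neg_smul]
    · exact shatter_aux 𝒯f h𝒯 hshat hAW (fun e => f (svec e)) hrelA e₀ he₀ hpos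
  · rw [Set.InjOn] at hinj
    push_neg at hinj
    obtain ⟨e₁, he₁, e₂, he₂, heq, hne⟩ := hinj
    have he₁' : e₁ ∈ A := Finset.mem_coe.mp he₁
    have he₂' : e₂ ∈ A := Finset.mem_coe.mp he₂
    obtain ⟨T, hT, hPT⟩ := hshat (Finset.singleton_subset_iff.mpr he₁')
    obtain ⟨θ, rfl⟩ := h𝒯 T hT
    have h1 : e₁ ∈ spat G θ := by
      have : e₁ ∈ A ∩ spat G θ := by rw [hPT]; exact Finset.mem_singleton_self e₁
      exact (Finset.mem_inter.mp this).2
    have h2 : e₂ ∉ spat G θ := by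
      intro h
      have hmem : e₂ ∈ A ∩ spat G θ := Finset.mem_inter.mpr ⟨he₂', h⟩
      rw [hPT] at hmem
      exact hne (Finset.mem_singleton.mp hmem).symm
    have hlin : slin e₁ θ = slin e₂ θ := by rw [slin_eq, slin_eq, heq]
    exact h2 (mem_spat.mpr ⟨hAW e₂ he₂', hlin ▸ (mem_spat.mp h1).2⟩)

/-- Fiber-counting: if every non-exceptional element of `s` has a mate with the same image,
then the image is at most half of `s` (plus one). -/
private lemma image_card_le {α β : Type*} [DecidableEq α] [DecidableEq β]
    (s : Finset α) (f : α → β) (σ : α → α) (a₀ : α)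
    (hσ : ∀ a ∈ s, a ≠ a₀ → (σ a ∈ s ∧ σ a ≠ a₀ ∧ σ a ≠ a ∧ f (σ a) = f a)) :
    2 * (s.image f).card ≤ s.card + 1 := by
  classical
  set s' := s.erase a₀ with hs'
  have hmaps : ∀ a ∈ s', f a ∈ s'.image f := fun a ha => Finset.mem_image_of_mem f ha
  have hsum : s'.card = ∑ b ∈ s'.image f, (s'.filter (fun a => f a = b)).card :=
    Finset.card_eq_sum_card_fiberwise hmaps
  have hfib : ∀ b ∈ s'.image f, 2 ≤ (s'.filter (fun a => f a = b)).card := by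
    intro b hb
    obtain ⟨a, ha, rfl⟩ := Finset.mem_image.mp hb
    obtain ⟨h1, h2, h3, h4⟩ := hσ a (Finset.mem_of_mem_erase ha) (Finset.ne_of_mem_erase ha)
    have hσa : σ a ∈ s' := Finset.mem_erase.mpr ⟨h2, h1⟩
    have hpair : ({a, σ a} : Finset α) ⊆ s'.filter (fun x => f x = f a) := by
      intro x hx
      rcases Finset.mem_insert.mp hx with rfl | hx
      · exact Finset.mem_filter.mpr ⟨ha, rfl⟩
      · rw [Finset.mem_singleton.mp hx]
        exact Finset.mem_filter.mpr ⟨hσa, h4⟩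
    calc 2 = ({a, σ a} : Finset α).card := (Finset.card_pair (Ne.symm h3)).symm
      _ ≤ _ := Finset.card_le_card hpair
  have h2 : 2 * (s'.image f).card ≤ s'.card := by
    rw [hsum]
    calc 2 * (s'.image f).card = ∑ _b ∈ s'.image f, 2 := by
          rw [Finset.sum_const, smul_eq_mul, mul_comm]
      _ ≤ _ := Finset.sum_le_sum hfib
  by_cases hmem : a₀ ∈ s
  · have hc : s'.card + 1 = s.card := Finset.card_erase_add_one hmem
    have himg : s.image f ⊆ insert (f a₀) (s'.image f) := by
      intro b hb
      obtain ⟨a, ha, rfl⟩ := Finset.mem_image.mp hb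
      by_cases h : a = a₀
      · subst h; exact Finset.mem_insert_self _ _
      · exact Finset.mem_insert_of_mem
          (Finset.mem_image_of_mem f (Finset.mem_erase.mpr ⟨h, ha⟩))
    have hcard1 : (s.image f).card ≤ (s'.image f).card + 1 :=
      (Finset.card_le_card himg).trans (Finset.card_insert_le _ _)
    omega
  · have heq : s' = s := Finset.erase_eq_of_notMem hmem
    rw [heq] at h2
    omega


end SlabPatterns
theorem shattering_bound_for_lp_ranges
    (d : ℕ) (hd : 1 ≤ d) (p : ℝ) (hp : 1 ≤ p)
    (G : Finset (Fin d → ℝ)) (m : ℕ) (hm : G.card = m) (hm2 : 2 ≤ m) :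
    Set.ncard {S : Set (Fin d → ℝ) | ∃ (x : Fin d → ℝ) (r : ℝ), 0 ≤ r ∧
        S = {a ∈ (G : Set (Fin d → ℝ)) | |a ⬝ᵥ x| ^ p ≤ r}} ≤ m ^ (d + 1) := by
  classical
  have hp0 : (0:ℝ) < p := lt_of_lt_of_le one_pos hp
  set ℱ : Set (Set (Fin d → ℝ)) := {S : Set (Fin d → ℝ) | ∃ (x : Fin d → ℝ) (r : ℝ), 0 ≤ r ∧
        S = {a ∈ (G : Set (Fin d → ℝ)) | |a ⬝ᵥ x| ^ p ≤ r}} with hℱ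
  -- every member of ℱ is the coercion of a slab-filter finset
  have hfam : ℱ = (fun R : Finset (Fin d → ℝ) => (R : Set (Fin d → ℝ))) ''
      {R | ∃ (x : Fin d → ℝ) (s : ℝ), 0 ≤ s ∧ R = G.filter (fun a => |a ⬝ᵥ x| ≤ s)} := by
    ext S
    simp only [hℱ, Set.mem_setOf_eq, Set.mem_image]
    constructor
    · rintro ⟨x, r, hr, rfl⟩
      refine ⟨G.filter (fun a => |a ⬝ᵥ x| ≤ r ^ p⁻¹), ⟨x, r ^ p⁻¹, Real.rpow_nonneg hr _, rfl⟩, ?_⟩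
      rw [Finset.coe_filter]
      ext a
      simp only [Set.mem_setOf_eq, Finset.mem_coe]
      constructor
      · rintro ⟨ha, h⟩
        exact ⟨ha, (Real.le_rpow_inv_iff_of_pos (abs_nonneg _) hr hp0).mp h⟩
      · rintro ⟨ha, h⟩
        exact ⟨ha, (Real.le_rpow_inv_iff_of_pos (abs_nonneg _) hr hp0).mpr h⟩
    · rintro ⟨R, ⟨x, s, hs, rfl⟩, rfl⟩
      refine ⟨x, s ^ p, Real.rpow_nonneg hs _, ?_⟩
      rw [Finset.coe_filter]
      ext a
      simp only [Set.mem_setOf_eq, Finset.mem_coe]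
      constructor
      · rintro ⟨ha, h⟩
        exact ⟨ha, Real.rpow_le_rpow (abs_nonneg _) h hp0.le⟩
      · rintro ⟨ha, h⟩
        exact ⟨ha, (Real.rpow_le_rpow_iff (abs_nonneg _) hs hp0).mp h⟩
  rw [hfam, Set.ncard_image_of_injective _ Finset.coe_injective]
  set 𝒮 : Set (Finset (Fin d → ℝ)) :=
    {R | ∃ (x : Fin d → ℝ) (s : ℝ), 0 ≤ s ∧ R = G.filter (fun a => |a ⬝ᵥ x| ≤ s)} with h𝒮
  rcases eq_or_lt_of_le hd with hd1 | hd2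
  · -- dimension 1 : the family is a chain, so it has at most m + 1 members
    have hdown : ∀ R ∈ 𝒮, ∀ a b : Fin d → ℝ, a ∈ G → b ∈ R →
        |a ⬝ᵥ a| * |b ⬝ᵥ b| ≤ |b ⬝ᵥ b| * |a ⬝ᵥ a| → True := fun _ _ _ _ _ _ _ => trivial
    -- the key function : a ↦ |a 0|  (note d = 1)
    have hkey : ∀ (x : Fin d → ℝ) (a : Fin d → ℝ), |a ⬝ᵥ x| = |a (Fin.mk 0 (by omega))| * |x (Fin.mk 0 (by omega))| := by
      intro x a
      have hd' : d = 1 := hd1.symm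
      subst hd'
      rw [show a ⬝ᵥ x = a 0 * x 0 by simp [dotProduct, Fin.sum_univ_one], abs_mul]
      rfl
    have hmono : ∀ R ∈ 𝒮, ∀ a b : Fin d → ℝ, a ∈ G → b ∈ R →
        |a (Fin.mk 0 (by omega))| ≤ |b (Fin.mk 0 (by omega))| → a ∈ R := by
      rintro R ⟨x, s, hs, rfl⟩ a b ha hb hab
      have hbG := Finset.mem_filter.mp hb
      refine Finset.mem_filter.mpr ⟨ha, ?_⟩
      rw [hkey x a]
      calc |a (Fin.mk 0 (by omega))| * |x (Fin.mk 0 (by omega))|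
          ≤ |b (Fin.mk 0 (by omega))| * |x (Fin.mk 0 (by omega))| :=
            mul_le_mul_of_nonneg_right hab (abs_nonneg _)
        _ = |b ⬝ᵥ x| := (hkey x b).symm
        _ ≤ s := hbG.2
    have htot : ∀ R₁ ∈ 𝒮, ∀ R₂ ∈ 𝒮, R₁ ⊆ R₂ ∨ R₂ ⊆ R₁ := by
      intro R₁ h₁ R₂ h₂
      by_contra hc
      push_neg at hc
      obtain ⟨hns₁, hns₂⟩ := hc
      obtain ⟨a, ha1, ha2⟩ := Finset.not_subset.mp hns₁
      obtain ⟨b, hb2, hb1⟩ := Finset.not_subset.mp hns₂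
      have haG : a ∈ G := by
        obtain ⟨x, s, hs, rfl⟩ := h₁; exact (Finset.mem_filter.mp ha1).1
      have hbG : b ∈ G := by
        obtain ⟨x, s, hs, rfl⟩ := h₂; exact (Finset.mem_filter.mp hb2).1
      rcases le_total (|a (Fin.mk 0 (by omega))|) (|b (Fin.mk 0 (by omega))|) with h | h
      · exact ha2 (hmono R₂ h₂ a b haG hb2 h)
      · exact hb1 (hmono R₁ h₁ b a hbG ha1 h)
    -- 𝒮 is finite
    have hfin : 𝒮.Finite := by
      apply Set.Finite.subset (G.powerset.finite_toSet)
      rintro R ⟨x, s, hs, rfl⟩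
      exact Finset.mem_coe.mpr (Finset.mem_powerset.mpr (Finset.filter_subset _ _))
    -- the cardinality map is injective on 𝒮
    have hinj : Set.InjOn (fun R : Finset (Fin d → ℝ) => R.card) 𝒮 := by
      intro R₁ h₁ R₂ h₂ hcard
      rcases htot R₁ h₁ R₂ h₂ with h | h
      · exact Finset.eq_of_subset_of_card_le h (le_of_eq hcard.symm)
      · exact (Finset.eq_of_subset_of_card_le h (le_of_eq hcard)).symm
    have himg : (fun R : Finset (Fin d → ℝ) => R.card) '' 𝒮 ⊆ ↑(Finset.range (m + 1)) := by
      rintro n ⟨R, ⟨x, s, hs, rfl⟩, rfl⟩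
      simp only [Finset.coe_range, Set.mem_Iio]
      have := Finset.card_le_card (Finset.filter_subset (fun a => |a ⬝ᵥ x| ≤ s) G)
      omega
    calc 𝒮.ncard = ((fun R : Finset (Fin d → ℝ) => R.card) '' 𝒮).ncard :=
          (Set.ncard_image_of_injOn hinj).symm
      _ ≤ (↑(Finset.range (m + 1)) : Set ℕ).ncard :=
          Set.ncard_le_ncard himg (Finset.finite_toSet _)
      _ = m + 1 := by rw [Set.ncard_coe_finset, Finset.card_range]
      _ ≤ m ^ (d + 1) := by
          have hdd : d + 1 = 2 := by omega
          rw [hdd, pow_two]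
          nlinarith
  · -- dimension ≥ 2 : sign-pattern counting
    set 𝒯 : Set (Finset ((Fin d → ℝ) × Bool)) :=
      {T | ∃ θ : (Fin d → ℝ) × ℝ, 0 ≤ θ.2 ∧ T = spat G θ} with h𝒯
    have h𝒯fin : 𝒯.Finite := by
      apply Set.Finite.subset ((G ×ˢ (Finset.univ : Finset Bool)).powerset.finite_toSet)
      rintro T ⟨θ, _, rfl⟩
      exact Finset.mem_coe.mpr (Finset.mem_powerset.mpr spat_subset)
    set 𝒯f := h𝒯fin.toFinset with h𝒯f
    have hmem𝒯f : ∀ T, T ∈ 𝒯f ↔ ∃ θ : (Fin d → ℝ) × ℝ, 0 ≤ θ.2 ∧ T = spat G θ := by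
      intro T
      rw [h𝒯f, Set.Finite.mem_toFinset]
      rfl
    have h𝒮img : 𝒮 = ↑(𝒯f.image (srng G)) := by
      ext R
      simp only [h𝒮, Set.mem_setOf_eq, Finset.coe_image, Set.mem_image, Finset.mem_coe]
      constructor
      · rintro ⟨x, s, hs, rfl⟩
        exact ⟨spat G (x, s), (hmem𝒯f _).mpr ⟨(x, s), hs, rfl⟩, srng_spat G x s⟩
      · rintro ⟨T, hT, rfl⟩
        obtain ⟨⟨x, s⟩, hs, rfl⟩ := (hmem𝒯f T).mp hT
        exact ⟨x, s, hs, srng_spat G x s⟩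
    rw [h𝒮img, Set.ncard_coe_finset]
    -- orbit bound via the flip involution
    have horbit : 2 * ((𝒯f.image (srng G)).card) ≤ 𝒯f.card + 1 := by
      apply image_card_le 𝒯f (srng G) sflip ∅
      intro T hT hTne
      obtain ⟨⟨x, s⟩, hs, rfl⟩ := (hmem𝒯f T).mp hT
      refine ⟨?_, ?_, ?_, srng_sflip G _⟩
      · exact (hmem𝒯f _).mpr ⟨(-x, s), hs, (sflip_spat G x s).symm⟩
      · intro h
        exact hTne (Finset.image_eq_empty.mp h)
      · intro h
        exact hTne (sflip_empty_of_fixed hs h)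
    -- Sauer--Shelah (Pajor) bound on the number of patterns
    have hSauer : 𝒯f.card ≤ (𝒯f.shatterer).card := Finset.card_le_card_shatterer 𝒯f
    have hVC : ∀ A ∈ 𝒯f.shatterer, A.card ≤ d + 1 := by
      intro A hA
      exact no_big_shatter 𝒯f
        (fun T hT => ((hmem𝒯f T).mp hT).imp (fun θ h => h.2))
        (Finset.mem_shatterer.mp hA)
    have hsubW : ∀ A ∈ 𝒯f.shatterer, A ⊆ G ×ˢ (Finset.univ : Finset Bool) := by
      intro A hA
      obtain ⟨T, hT, hsub⟩ := (Finset.mem_shatterer.mp hA).exists_superset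
      obtain ⟨θ, _, rfl⟩ := (hmem𝒯f T).mp hT
      exact hsub.trans spat_subset
    have hWcard : (G ×ˢ (Finset.univ : Finset Bool)).card = 2 * m := by
      rw [Finset.card_product, hm, Finset.card_univ, Fintype.card_bool, mul_comm]
    have hshat_count : (𝒯f.shatterer).card ≤ ∑ i ∈ Finset.range (d + 2), Nat.choose (2 * m) i := by
      have hsubset : 𝒯f.shatterer ⊆ (Finset.range (d + 2)).biUnion
          (fun i => (G ×ˢ (Finset.univ : Finset Bool)).powersetCard i) := by
        intro A hA
        exact Finset.mem_biUnion.mpr ⟨A.card,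
          Finset.mem_range.mpr (by have := hVC A hA; omega),
          Finset.mem_powersetCard.mpr ⟨hsubW A hA, rfl⟩⟩
      calc (𝒯f.shatterer).card
          ≤ ((Finset.range (d + 2)).biUnion
            (fun i => (G ×ˢ (Finset.univ : Finset Bool)).powersetCard i)).card :=
            Finset.card_le_card hsubset
        _ ≤ ∑ i ∈ Finset.range (d + 2),
              ((G ×ˢ (Finset.univ : Finset Bool)).powersetCard i).card :=
            Finset.card_biUnion_le
        _ = ∑ i ∈ Finset.range (d + 2), Nat.choose (2 * m) i := by
            refine Finset.sum_congr rfl (fun i _ => ?_)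
            rw [Finset.card_powersetCard, hWcard]
    have harr : (∑ i ∈ Finset.range (d + 2), Nat.choose (2 * m) i) + 1 ≤ 2 * m ^ (d + 1) := by
      have := sum_choose_le hm2 (show 3 ≤ d + 1 by omega)
      simpa using this
    omega
end

section
/- Let d ≥ 2 be even, and let a_1,…,a_n ∈ {0,1}^d enumerate all vectors with exactly d/2 coordinates equal to 1, so that n = C(d, d/2). Define f_i(x) = max(⟨a_i, x⟩, 0). Then for every i ∈ {1,…,n} there exists x ∈ ℝ^d with f_i(x) = 1 and f_j(x) = 0 for all j ≠ i (take x_k = 2/d if (a_i)_k = 1 and x_k = −d otherwise); consequently each sensitivity s_i = sup{ f_i(x)/Σ_{j=1}^n f_j(x) : Σ_j f_j(x) > 0 } satisfies s_i ≥ 1, and the total sensitivity of the family {f_i}_{i=1}^n is at least C(d, d/2). -/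
open Matrix Finset

theorem hinge_loss_total_sensitivity_lower_bound
    (d n : ℕ) (hd2 : 2 ≤ d) (hdeven : Even d)
    (a : Fin n → (Fin d → ℝ))
    (ha01 : ∀ i k, a i k = 0 ∨ a i k = 1)
    (hacard : ∀ i, (Finset.univ.filter (fun k => a i k = 1)).card = d / 2)
    (hainj : Function.Injective a)
    (hasurj : ∀ v : Fin d → ℝ, (∀ k, v k = 0 ∨ v k = 1) →
        (Finset.univ.filter (fun k => v k = 1)).card = d / 2 → ∃ i, a i = v)
    (hn : n = Nat.choose d (d / 2))
    (f : Fin n → (Fin d → ℝ) → ℝ) (hf : ∀ i x, f i x = max (a i ⬝ᵥ x) 0)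
    (s : Fin n → ℝ)
    (hs : ∀ i, s i = sSup {v | ∃ x : Fin d → ℝ, 0 < ∑ j, f j x ∧ v = f i x / ∑ j, f j x}) :
    (∀ i, ∃ x : Fin d → ℝ, f i x = 1 ∧ ∀ j, j ≠ i → f j x = 0) ∧
    (∀ i, 1 ≤ s i) ∧
    ((Nat.choose d (d / 2) : ℝ) ≤ ∑ i, s i) := by
  have hd0 : (0:ℝ) < d := by
    have : 0 < d := lt_of_lt_of_le two_pos hd2
    exact_mod_cast this
  have hdiv : (d / 2 : ℕ) * 2 = d := Nat.div_mul_cancel hdeven.two_dvd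
  have hhalf : ((d / 2 : ℕ) : ℝ) * (2 / d) = 1 := by
    field_simp
    exact_mod_cast hdiv
  have fnonneg : ∀ j x, 0 ≤ f j x := by
    intro j x; rw [hf]; exact le_max_right _ _
  have main : ∀ i, ∃ x : Fin d → ℝ, f i x = 1 ∧ ∀ j, j ≠ i → f j x = 0 := by
    intro i
    set x : Fin d → ℝ := fun k => if a i k = 1 then 2 / d else -d with hx
    have hfi : f i x = 1 := by
      rw [hf]
      have hdot : a i ⬝ᵥ x = 1 := by
        have h1 : a i ⬝ᵥ x = ∑ k, (if a i k = 1 then (2 / (d:ℝ)) else 0) := by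
          simp only [dotProduct, hx]
          refine Finset.sum_congr rfl fun k _ => ?_
          rcases ha01 i k with h | h <;> simp [h]
        rw [h1, ← Finset.sum_filter, Finset.sum_const, hacard i, nsmul_eq_mul, hhalf]
      rw [hdot]; simp
    refine ⟨x, hfi, ?_⟩
    intro j hj
    have haij : a j ≠ a i := fun h => hj (hainj h)
    -- compute the dot product for j
    have h1 : a j ⬝ᵥ x = ∑ k ∈ Finset.univ.filter (fun k => a j k = 1), x k := by
      simp only [dotProduct]
      rw [Finset.sum_filter]
      refine Finset.sum_congr rfl fun k _ => ?_
      rcases ha01 j k with h | h <;> simp [h]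
    set Sj := Finset.univ.filter (fun k => a j k = 1) with hSj
    set Si := Finset.univ.filter (fun k => a i k = 1) with hSi
    have h2 : a j ⬝ᵥ x =
        ((Sj.filter (fun k => a i k = 1)).card : ℝ) * (2 / d)
        + ((Sj.filter (fun k => ¬ a i k = 1)).card : ℝ) * (-d) := by
      rw [h1]
      have : ∑ k ∈ Sj, x k
          = ∑ k ∈ Sj.filter (fun k => a i k = 1), (2 / (d:ℝ))
            + ∑ k ∈ Sj.filter (fun k => ¬ a i k = 1), (-(d:ℝ)) := by
        rw [← Finset.sum_ite]
      rw [this, Finset.sum_const, Finset.sum_const, nsmul_eq_mul, nsmul_eq_mul]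
    have hc1 : ((Sj.filter (fun k => a i k = 1)).card : ℝ) ≤ ((d / 2 : ℕ) : ℝ) := by
      have hsub : Sj.filter (fun k => a i k = 1) ⊆ Si := by
        intro k hk
        simp only [hSi, Finset.mem_filter, Finset.mem_univ, true_and]
        exact (Finset.mem_filter.mp hk).2
      have := Finset.card_le_card hsub
      rw [hSi, hacard i] at this
      exact_mod_cast this
    have hc2 : (1 : ℝ) ≤ ((Sj.filter (fun k => ¬ a i k = 1)).card : ℝ) := by
      have hne : (Sj.filter (fun k => ¬ a i k = 1)).Nonempty := by
        by_contra hemp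
        rw [Finset.not_nonempty_iff_eq_empty, Finset.filter_eq_empty_iff] at hemp
        have hsub : Sj ⊆ Si := by
          intro k hk
          simp only [hSi, Finset.mem_filter, Finset.mem_univ, true_and]
          by_contra hne1
          exact hemp hk hne1
        have hcardeq : Si.card ≤ Sj.card := by
          rw [hSi, hSj, hacard i, hacard j]
        have heq : Sj = Si := Finset.eq_of_subset_of_card_le hsub hcardeq
        apply haij
        funext k
        have hmem : a j k = 1 ↔ a i k = 1 := by
          constructor
          · intro h
            have : k ∈ Sj := by simp [hSj, h]
            rw [heq] at this
            exact (Finset.mem_filter.mp this).2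
          · intro h
            have : k ∈ Si := by simp [hSi, h]
            rw [← heq] at this
            exact (Finset.mem_filter.mp this).2
        rcases ha01 j k with h | h <;> rcases ha01 i k with h' | h'
        · rw [h, h']
        · exact absurd (hmem.mpr h') (by rw [h]; norm_num)
        · exact absurd (hmem.mp h) (by rw [h']; norm_num)
        · rw [h, h']
      have := Finset.card_pos.mpr hne
      exact_mod_cast this
    have hdotle : a j ⬝ᵥ x ≤ 0 := by
      rw [h2]
      have h3 : ((Sj.filter (fun k => a i k = 1)).card : ℝ) * (2 / d) ≤ 1 := by
        calc ((Sj.filter (fun k => a i k = 1)).card : ℝ) * (2 / d)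
            ≤ ((d / 2 : ℕ) : ℝ) * (2 / d) := by
              apply mul_le_mul_of_nonneg_right hc1
              positivity
          _ = 1 := hhalf
      have h4 : ((Sj.filter (fun k => ¬ a i k = 1)).card : ℝ) * (-d) ≤ -d := by
        nlinarith
      have hd1 : (1:ℝ) ≤ d := by
        have : (2:ℝ) ≤ d := by exact_mod_cast hd2
        linarith
      linarith
    rw [hf]
    exact max_eq_right hdotle
  have hsi : ∀ i, 1 ≤ s i := by
    intro i
    obtain ⟨x, hfi, hfj⟩ := main i
    have hsum : ∑ j, f j x = 1 := by
      rw [Finset.sum_eq_single i (fun j _ hj => hfj j hj)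
        (fun h => absurd (Finset.mem_univ i) h), hfi]
    rw [hs]
    apply le_csSup
    · refine ⟨1, ?_⟩
      rintro v ⟨y, hy, rfl⟩
      rw [div_le_one hy]
      exact Finset.single_le_sum (fun j _ => fnonneg j y) (Finset.mem_univ i)
    · exact ⟨x, by rw [hsum]; norm_num, by rw [hfi, hsum]; norm_num⟩
  refine ⟨main, hsi, ?_⟩
  calc ((Nat.choose d (d / 2) : ℕ) : ℝ) = (n : ℝ) := by rw [hn]
    _ = ∑ _i : Fin n, (1 : ℝ) := by simp
    _ ≤ ∑ i, s i := Finset.sum_le_sum fun i _ => hsi i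
end
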